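/- The function a ↦ ln(a!)/(a-1) is strictly increasing for integers a ≥ 2; equivalently, for every integer a ≥ 3, (a!)^{a-2} > ((a-1)!)^{a-1}. -/

import Mathlib

lemma fact_lt_pow : ∀ n : ℕ, 2 ≤ n → Nat.factorial n < (n + 1) ^ (n - 1) := by
  intro n hn
  induction n with
  | zero => omega
  | succ k ih =>
    rcases Nat.lt_or_ge k 2 with hk | hk
    · interval_cases k
      · omega
      · decide
    · have h1 : Nat.factorial (k + 1) = (k + 1) * Nat.factorial k := rfl
      have h2 : (k + 1) * (k + 1) ^ (k - 1) = (k + 1) ^ k := by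
        rw [← pow_succ']
        congr 1
        omega
      calc Nat.factorial (k + 1) = (k + 1) * Nat.factorial k := h1
        _ < (k + 1) * (k + 1) ^ (k - 1) := by
            exact mul_lt_mul_of_pos_left (ih hk) (by omega)
        _ = (k + 1) ^ k := h2
        _ ≤ (k + 2) ^ k := Nat.pow_le_pow_left (by omega) k
        _ = (k + 2) ^ (k + 1 - 1) := by norm_num

lemma step_lt (n : ℕ) (hn : 2 ≤ n) :
    Real.log (Nat.factorial n) / ((n : ℝ) - 1) <
      Real.log (Nat.factorial (n + 1)) / (((n : ℝ) + 1) - 1) := by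
  have hden1 : (0:ℝ) < (n : ℝ) - 1 := by
    have : (2:ℝ) ≤ n := by exact_mod_cast hn
    linarith
  have hden2 : (0:ℝ) < ((n : ℝ) + 1) - 1 := by linarith
  rw [div_lt_div_iff₀ hden1 hden2]
  have hfact : Real.log (Nat.factorial (n + 1)) =
      Real.log (n + 1) + Real.log (Nat.factorial n) := by
    rw [Nat.factorial_succ]
    push_cast
    rw [Real.log_mul (by positivity) (by exact_mod_cast (Nat.factorial_pos n).ne')]
  have hkey : Real.log (Nat.factorial n) < ((n : ℝ) - 1) * Real.log (n + 1) := by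
    have h := fact_lt_pow n hn
    have h' : Real.log (Nat.factorial n) < Real.log ((( n : ℝ) + 1) ^ (n - 1)) := by
      apply Real.log_lt_log (by exact_mod_cast Nat.factorial_pos n)
      exact_mod_cast h
    rwa [Real.log_pow, Nat.cast_sub (by omega), Nat.cast_one] at h'
  have hlog_nonneg : 0 ≤ Real.log (n + 1) := by
    apply Real.log_nonneg
    have : (0:ℝ) ≤ n := Nat.cast_nonneg n
    linarith
  rw [hfact]
  nlinarith

theorem stmt_2 :
    (StrictMonoOn (fun a : ℕ => Real.log (Nat.factorial a) / ((a : ℝ) - 1))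
      {a : ℕ | 2 ≤ a}) ∧
    (∀ a : ℕ, 3 ≤ a →
      (Nat.factorial (a - 1)) ^ (a - 1) < (Nat.factorial a) ^ (a - 2)) := by
  constructor
  · have main : ∀ m n : ℕ, 2 ≤ n → n < m →
        Real.log (Nat.factorial n) / ((n : ℝ) - 1) <
          Real.log (Nat.factorial m) / ((m : ℝ) - 1) := by
      intro m
      induction m with
      | zero => omega
      | succ k ih =>
        intro n h2 hlt
        rcases eq_or_lt_of_le (Nat.lt_succ_iff.mp hlt) with h | h
        · subst h
          have := step_lt n h2
          push_cast
          push_cast at this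
          convert this using 2
        · have h1 := ih n h2 h
          have h2' := step_lt k (by omega)
          push_cast at h2' ⊢
          linarith
    intro a ha b hb hab
    exact main b a ha hab
  · intro a ha
    have h := fact_lt_pow (a - 1) (by omega)
    have h1 : a - 1 - 1 = a - 2 := by omega
    have h2 : a - 1 + 1 = a := by omega
    rw [h1, h2] at h
    have hfa : Nat.factorial a = a * Nat.factorial (a - 1) := by
      rw [← h2, Nat.factorial_succ, h2]
    have h3 : a - 1 = (a - 2) + 1 := by omega
    calc Nat.factorial (a - 1) ^ (a - 1)
        = Nat.factorial (a - 1) ^ (a - 2) * Nat.factorial (a - 1) := by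
          rw [h3, pow_succ]
      _ < Nat.factorial (a - 1) ^ (a - 2) * a ^ (a - 2) := by
          exact mul_lt_mul_of_pos_left h (Nat.pow_pos (Nat.factorial_pos _))
      _ = (a * Nat.factorial (a - 1)) ^ (a - 2) := by rw [mul_pow]; ring
      _ = Nat.factorial a ^ (a - 2) := by rw [← hfa]
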